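/- Let $1 \le p, q \le \infty$ and $\alpha < n(1 - 1/q)$. Then every $f$ in the homogeneous Herz space $\dot K_q^{\alpha,p}$ is locally integrable on $\mathbb{R}^n$, and for every Schwartz function $\varphi$ the integral $\int_{\mathbb{R}^n} f(x)\varphi(x)\,dx$ converges absolutely, so that $f$ defines a tempered distribution on $\mathbb{R}^n$. -/

import Mathlib

open MeasureTheory ENNReal

noncomputable section

/-- `n`-dimensional Euclidean space. -/
abbrev Eu (n : ℕ) := EuclideanSpace ℝ (Fin n)

/-- The dyadic annulus `C_k = {x : 2^(k-1) < |x| ≤ 2^k}`. -/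
def annulus (n : ℕ) (k : ℤ) : Set (Eu n) :=
  {x | (2:ℝ) ^ (k - 1) < ‖x‖ ∧ ‖x‖ ≤ (2:ℝ) ^ k}

/-- The homogeneous Herz quasi-norm `‖f‖_{K̇_q^{α,p}}`
(`p` is the outer sequence exponent, `q` the Lebesgue exponent),
with the usual supremum modification when `p = ∞`. -/
def herzNorm (n : ℕ) (α : ℝ) (p q : ℝ≥0∞) (f : Eu n → ℝ) : ℝ≥0∞ :=
  if p = ∞ then
    ⨆ k : ℤ, (2:ℝ≥0∞) ^ ((k:ℝ) * α) * eLpNorm ((annulus n k).indicator f) q volume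
  else
    (∑' k : ℤ, ((2:ℝ≥0∞) ^ ((k:ℝ) * α) *
      eLpNorm ((annulus n k).indicator f) q volume) ^ p.toReal) ^ (1 / p.toReal)

namespace HerzAux

lemma two_rpow_eq (a : ℝ) : (2:ℝ≥0∞) ^ a = ENNReal.ofReal ((2:ℝ) ^ a) := by
  rw [← ENNReal.ofReal_rpow_of_pos two_pos]
  norm_num

lemma two_rpow_ne_top (a : ℝ) : (2:ℝ≥0∞) ^ a ≠ ∞ := by
  rw [two_rpow_eq]; exact ENNReal.ofReal_ne_top

lemma two_rpow_ne_zero (a : ℝ) : (2:ℝ≥0∞) ^ a ≠ 0 := by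
  rw [two_rpow_eq]
  simpa using Real.rpow_pos_of_pos two_pos a

lemma two_rpow_add (a b : ℝ) : (2:ℝ≥0∞) ^ (a + b) = 2 ^ a * 2 ^ b :=
  ENNReal.rpow_add a b (by norm_num) (by norm_num)

lemma measurableSet_annulus {n : ℕ} {k : ℤ} : MeasurableSet (annulus n k) := by
  have : annulus n k = (fun x : Eu n => ‖x‖) ⁻¹'
      Set.Ioc ((2:ℝ) ^ (k-1)) ((2:ℝ) ^ k) := rfl
  rw [this]
  exact measurable_norm measurableSet_Ioc

lemma annulus_subset_closedBall {n : ℕ} {k : ℤ} :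
    annulus n k ⊆ Metric.closedBall 0 ((2:ℝ) ^ k) := by
  intro x hx
  simpa [Metric.mem_closedBall, dist_zero_right] using hx.2

lemma mem_annulus_of_ne_zero {n : ℕ} {x : Eu n} (hx : x ≠ 0) :
    ∃ k : ℤ, x ∈ annulus n k := by
  have hnorm : (0:ℝ) < ‖x‖ := norm_pos_iff.mpr hx
  refine ⟨⌈Real.logb 2 ‖x‖⌉, ?_, ?_⟩
  · have h1 : ((⌈Real.logb 2 ‖x‖⌉ - 1 : ℤ) : ℝ) < Real.logb 2 ‖x‖ := by
      push_cast
      have := Int.ceil_lt_add_one (Real.logb 2 ‖x‖)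
      linarith
    calc (2:ℝ) ^ (⌈Real.logb 2 ‖x‖⌉ - 1 : ℤ)
        = (2:ℝ) ^ ((⌈Real.logb 2 ‖x‖⌉ - 1 : ℤ) : ℝ) := (Real.rpow_intCast _ _).symm
      _ < (2:ℝ) ^ Real.logb 2 ‖x‖ := by
          exact (Real.rpow_lt_rpow_left_iff one_lt_two).mpr h1
      _ = ‖x‖ := Real.rpow_logb two_pos (by norm_num) hnorm
  · have h2 : Real.logb 2 ‖x‖ ≤ ((⌈Real.logb 2 ‖x‖⌉ : ℤ) : ℝ) := Int.le_ceil _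
    calc ‖x‖ = (2:ℝ) ^ Real.logb 2 ‖x‖ := (Real.rpow_logb two_pos (by norm_num) hnorm).symm
      _ ≤ (2:ℝ) ^ ((⌈Real.logb 2 ‖x‖⌉ : ℤ) : ℝ) :=
          (Real.rpow_le_rpow_left_iff one_lt_two).mpr h2
      _ = (2:ℝ) ^ (⌈Real.logb 2 ‖x‖⌉ : ℤ) := Real.rpow_intCast _ _

lemma geom_sum_lt_top {D : ℝ≥0∞} (hD : D ≠ ∞) (a : ℝ) {δ : ℝ} (hδ : 0 < δ) :
    ∑' j : ℕ, (2:ℝ≥0∞) ^ (a - (j:ℝ) * δ) * D < ∞ := by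
  have hterm : ∀ j : ℕ, (2:ℝ≥0∞) ^ (a - (j:ℝ) * δ) * D
      = ((2:ℝ≥0∞) ^ a * D) * ((2:ℝ≥0∞) ^ (-δ)) ^ j := by
    intro j
    have : (2:ℝ≥0∞) ^ (a - (j:ℝ) * δ) = (2:ℝ≥0∞) ^ a * ((2:ℝ≥0∞) ^ (-δ)) ^ j := by
      rw [← ENNReal.rpow_natCast ((2:ℝ≥0∞) ^ (-δ)) j, ← ENNReal.rpow_mul, sub_eq_add_neg,
        two_rpow_add]
      ring_nf
    rw [this]; ring
  rw [tsum_congr hterm, ENNReal.tsum_mul_left, ENNReal.tsum_geometric]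
  have hr : (2:ℝ≥0∞) ^ (-δ) < 1 := by
    have := ENNReal.rpow_lt_rpow_of_exponent_lt (x := 2) one_lt_two (by norm_num)
      (by linarith : -δ < 0)
    simpa using this
  have h1 : ((1:ℝ≥0∞) - (2:ℝ≥0∞) ^ (-δ))⁻¹ < ∞ := by
    rw [ENNReal.inv_lt_top]
    exact tsub_pos_of_lt hr
  exact ENNReal.mul_lt_top
    (ENNReal.mul_lt_top (two_rpow_ne_top a).lt_top hD.lt_top) h1

end HerzAux

open HerzAux

/-- For `1 ≤ p, q ≤ ∞` and `α < n(1 - 1/q)`, every member of the homogeneous Herz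
space `K̇_q^{α,p}` is locally integrable on `ℝ^n` and pairs absolutely with every
Schwartz function, hence defines a tempered distribution. -/
theorem herz_subset_L1loc_and_tempered (n : ℕ) (α : ℝ) (p q : ℝ≥0∞)
    (hp : 1 ≤ p) (hq : 1 ≤ q) (hα : α < (n:ℝ) * (1 - 1 / q.toReal))
    (f : Eu n → ℝ) (hf : Measurable f)
    (hfin : herzNorm n α p q f < ∞) :
    LocallyIntegrable f volume ∧
      ∀ φ : SchwartzMap (Eu n) ℝ, Integrable (fun x => f x * φ x) volume := by
  -- trivial case `n = 0`
  rcases Nat.eq_zero_or_pos n with hn0 | hn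
  · subst hn0
    haveI : Subsingleton (Eu 0) := by
      have h := finrank_euclideanSpace_fin (𝕜 := ℝ) (n := 0)
      exact Module.finrank_zero_iff.mp h
    haveI : IsFiniteMeasure (volume : Measure (Eu 0)) := by
      constructor
      have hsub : (Set.univ : Set (Eu 0)) ⊆ Metric.closedBall 0 1 := by
        intro x _
        have : x = 0 := Subsingleton.elim _ _
        simp [this]
      exact lt_of_le_of_lt (measure_mono hsub) measure_closedBall_lt_top
    have hconst : ∀ g : Eu 0 → ℝ, g = fun _ => g 0 := by
      intro g; funext x; rw [Subsingleton.elim x 0]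
    constructor
    · have : Integrable f volume := by
        rw [hconst f]; exact integrable_const _
      exact this.locallyIntegrable
    · intro φ
      have : (fun x => f x * φ x) = fun _ => f 0 * φ 0 := by
        funext x; rw [Subsingleton.elim x 0]
      rw [this]; exact integrable_const _
  -- main case `n ≥ 1`
  haveI : Nontrivial (Eu n) := by
    apply Module.nontrivial_of_finrank_pos (R := ℝ)
    rw [finrank_euclideanSpace_fin]; exact hn
  set β : ℝ := 1 - 1 / q.toReal with hβdef
  have hβ0 : 0 ≤ β := by
    rcases eq_or_ne q ∞ with hq' | hq'
    · simp [hβdef, hq']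
    · have h1 : (1:ℝ) ≤ q.toReal := by
        have := ENNReal.toReal_mono hq' hq
        simpa using this
      have h2 : 1 / q.toReal ≤ 1 := by
        rw [div_le_one (by linarith)]; linarith
      rw [hβdef]; linarith
  set ε : ℝ := (n:ℝ) * β - α with hεdef
  have hε : 0 < ε := by simp only [hεdef]; linarith
  set M : ℝ≥0∞ := herzNorm n α p q f with hMdef
  set c : ℝ≥0∞ := volume (Metric.ball (0 : Eu n) 1) with hcdef
  have hc : c ≠ ∞ := measure_ball_lt_top.ne
  set g : ℤ → ℝ≥0∞ := fun k => eLpNorm ((annulus n k).indicator f) q volume with hgdef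
  -- each Herz block is controlled by the Herz norm
  have hblock : ∀ k : ℤ, (2:ℝ≥0∞) ^ ((k:ℝ) * α) * g k ≤ M := by
    intro k
    rw [hMdef, herzNorm]
    split_ifs with hptop
    · exact le_iSup
        (fun k : ℤ => (2:ℝ≥0∞) ^ ((k:ℝ) * α) * eLpNorm ((annulus n k).indicator f) q volume) k
    · have hpt : 0 < p.toReal := ENNReal.toReal_pos (zero_lt_one.trans_le hp).ne' hptop
      have h1 : ((2:ℝ≥0∞) ^ ((k:ℝ) * α) * g k) ^ p.toReal ≤
          ∑' k : ℤ, ((2:ℝ≥0∞) ^ ((k:ℝ) * α) *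
            eLpNorm ((annulus n k).indicator f) q volume) ^ p.toReal :=
        ENNReal.le_tsum k
      calc (2:ℝ≥0∞) ^ ((k:ℝ) * α) * g k
          = (((2:ℝ≥0∞) ^ ((k:ℝ) * α) * g k) ^ p.toReal) ^ (1 / p.toReal) := by
            rw [← ENNReal.rpow_mul, mul_one_div, div_self hpt.ne', ENNReal.rpow_one]
        _ ≤ _ := ENNReal.rpow_le_rpow h1 (by positivity)
  have hg : ∀ k : ℤ, g k ≤ (2:ℝ≥0∞) ^ (-(k:ℝ) * α) * M := by
    intro k
    have := mul_le_mul_right (hblock k) ((2:ℝ≥0∞) ^ (-(k:ℝ) * α))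
    calc g k = (2:ℝ≥0∞) ^ (-(k:ℝ) * α) * ((2:ℝ≥0∞) ^ ((k:ℝ) * α) * g k) := by
          rw [← mul_assoc, ← two_rpow_add]
          ring_nf
          rw [ENNReal.rpow_zero, one_mul]
      _ ≤ (2:ℝ≥0∞) ^ (-(k:ℝ) * α) * M := this
  -- annulus volume bound
  have hvol : ∀ k : ℤ, volume (annulus n k) ≤ (2:ℝ≥0∞) ^ ((k:ℝ) * n) * c := by
    intro k
    refine (measure_mono annulus_subset_closedBall).trans ?_
    rw [Measure.addHaar_closedBall _ _ (by positivity)]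
    apply mul_le_mul_left
    rw [finrank_euclideanSpace_fin]
    rw [two_rpow_eq]
    apply le_of_eq
    congr 1
    rw [← Real.rpow_natCast ((2:ℝ)^(k:ℤ)) n, ← Real.rpow_intCast 2 k, ← Real.rpow_mul (by norm_num)]
  -- the crucial annulus integral bound
  have hann : ∀ k : ℤ, ∫⁻ x in annulus n k, (‖f x‖₊ : ℝ≥0∞) ≤
      (2:ℝ≥0∞) ^ ((k:ℝ) * ε) * (M * c ^ β) := by
    intro k
    have h1 : ∫⁻ x in annulus n k, (‖f x‖₊ : ℝ≥0∞) =
        eLpNorm f 1 (volume.restrict (annulus n k)) := by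
      rw [eLpNorm_one_eq_lintegral_enorm]; rfl
    have h2 : eLpNorm f 1 (volume.restrict (annulus n k)) ≤
        eLpNorm f q (volume.restrict (annulus n k)) * (volume (annulus n k)) ^ β := by
      have := eLpNorm_le_eLpNorm_mul_rpow_measure_univ (μ := volume.restrict (annulus n k))
        hq hf.aestronglyMeasurable.restrict
      simpa [Measure.restrict_apply_univ, hβdef] using this
    have h3 : eLpNorm f q (volume.restrict (annulus n k)) = g k :=
      (eLpNorm_indicator_eq_eLpNorm_restrict measurableSet_annulus).symm
    have h4 : (volume (annulus n k)) ^ β ≤ (2:ℝ≥0∞) ^ ((k:ℝ) * n * β) * c ^ β := by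
      calc (volume (annulus n k)) ^ β ≤ ((2:ℝ≥0∞) ^ ((k:ℝ) * n) * c) ^ β :=
            ENNReal.rpow_le_rpow (hvol k) hβ0
        _ = (2:ℝ≥0∞) ^ ((k:ℝ) * n * β) * c ^ β := by
            rw [ENNReal.mul_rpow_of_nonneg _ _ hβ0, ← ENNReal.rpow_mul]
    calc ∫⁻ x in annulus n k, (‖f x‖₊ : ℝ≥0∞)
        ≤ g k * (volume (annulus n k)) ^ β := by rw [h1, ← h3]; exact h2
      _ ≤ ((2:ℝ≥0∞) ^ (-(k:ℝ) * α) * M) * ((2:ℝ≥0∞) ^ ((k:ℝ) * n * β) * c ^ β) :=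
          mul_le_mul' (hg k) h4
      _ = (2:ℝ≥0∞) ^ ((k:ℝ) * ε) * (M * c ^ β) := by
          rw [hεdef]
          rw [show (k:ℝ) * ((n:ℝ) * β - α) = -(k:ℝ) * α + (k:ℝ) * n * β by ring, two_rpow_add]
          ring
  set D : ℝ≥0∞ := M * c ^ β with hDdef
  have hD : D ≠ ∞ :=
    ENNReal.mul_ne_top hfin.ne (ENNReal.rpow_ne_top_of_nonneg hβ0 hc)
  -- integral over dyadic balls is finite
  have hball : ∀ K : ℤ, ∫⁻ x in Metric.closedBall (0:Eu n) ((2:ℝ)^K), (‖f x‖₊ : ℝ≥0∞) < ∞ := by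
    intro K
    have hcover : Metric.closedBall (0:Eu n) ((2:ℝ)^K) ⊆
        {(0:Eu n)} ∪ ⋃ j : ℕ, annulus n (K - j) := by
      intro x hx
      by_cases hx0 : x = 0
      · exact Or.inl (by simp [hx0])
      · obtain ⟨k, hk⟩ := mem_annulus_of_ne_zero hx0
        have hxK : ‖x‖ ≤ (2:ℝ)^K := by
          simpa [Metric.mem_closedBall, dist_zero_right] using hx
        have hkK : k ≤ K := by
          have h2 : (2:ℝ) ^ (k - 1 : ℤ) < (2:ℝ) ^ (K : ℤ) := lt_of_lt_of_le hk.1 hxK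
          have := (zpow_lt_zpow_iff_right₀ (by norm_num : (1:ℝ) < 2)).mp h2
          omega
        refine Or.inr (Set.mem_iUnion.mpr ⟨(K - k).toNat, ?_⟩)
        have : (K : ℤ) - ((K - k).toNat : ℤ) = k := by omega
        rw [this]; exact hk
    calc ∫⁻ x in Metric.closedBall (0:Eu n) ((2:ℝ)^K), (‖f x‖₊ : ℝ≥0∞)
        ≤ ∫⁻ x in ({(0:Eu n)} ∪ ⋃ j : ℕ, annulus n (K - j)), (‖f x‖₊ : ℝ≥0∞) :=
          lintegral_mono_set hcover
      _ ≤ (∫⁻ x in ({(0:Eu n)} : Set (Eu n)), (‖f x‖₊ : ℝ≥0∞)) +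
          ∫⁻ x in (⋃ j : ℕ, annulus n (K - j)), (‖f x‖₊ : ℝ≥0∞) :=
          lintegral_union_le _ _ _
      _ = ∫⁻ x in (⋃ j : ℕ, annulus n (K - j)), (‖f x‖₊ : ℝ≥0∞) := by
          rw [Measure.restrict_eq_zero.mpr (measure_singleton 0), lintegral_zero_measure,
            zero_add]
      _ ≤ ∑' j : ℕ, ∫⁻ x in annulus n (K - j), (‖f x‖₊ : ℝ≥0∞) :=
          lintegral_iUnion_le _ _
      _ ≤ ∑' j : ℕ, (2:ℝ≥0∞) ^ (((K:ℝ) * ε) - (j:ℝ) * ε) * D := by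
          refine ENNReal.tsum_le_tsum fun j => ?_
          refine (hann (K - j)).trans (le_of_eq ?_)
          congr 2
          push_cast
          ring
      _ < ∞ := geom_sum_lt_top hD _ hε
  have hint : ∀ K : ℤ, IntegrableOn f (Metric.closedBall (0:Eu n) ((2:ℝ)^K)) volume :=
    fun K => ⟨hf.aestronglyMeasurable.restrict, hball K⟩
  constructor
  · rw [locallyIntegrable_iff]
    intro s hs
    obtain ⟨R, hR⟩ := hs.isBounded.subset_closedBall 0
    obtain ⟨m, hm⟩ := pow_unbounded_of_one_lt R (by norm_num : (1:ℝ) < 2)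
    refine (hint m).mono_set (hR.trans ?_)
    apply Metric.closedBall_subset_closedBall
    rw [zpow_natCast]
    exact hm.le
  · intro φ
    refine ⟨(hf.mul φ.continuous.measurable).aestronglyMeasurable, ?_⟩
    rw [HasFiniteIntegral]
    -- global bound on φ
    obtain ⟨C₀, hC₀pos, hC₀⟩ := φ.decay 0 0
    have hφbound : ∀ x : Eu n, ‖φ x‖ ≤ C₀ := by
      intro x
      have := hC₀ x
      simpa [norm_iteratedFDeriv_zero] using this
    -- decay bound on φ
    set N : ℕ := ⌈ε⌉₊ + 1 with hNdef
    have hNε : ε < (N:ℝ) := by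
      have := Nat.le_ceil ε
      push_cast [hNdef]
      linarith
    obtain ⟨C, hCpos, hC⟩ := φ.decay N 0
    have hφdecay : ∀ x : Eu n, ‖x‖ ^ N * ‖φ x‖ ≤ C := by
      intro x
      have := hC x
      simpa [norm_iteratedFDeriv_zero] using this
    -- split the integral
    have hcover : (Set.univ : Set (Eu n)) ⊆
        Metric.closedBall 0 ((2:ℝ)^(1:ℤ)) ∪ ⋃ j : ℕ, annulus n (1 + j) := by
      intro x _
      by_cases hx : ‖x‖ ≤ (2:ℝ)^(1:ℤ)
      · exact Or.inl (by simpa [Metric.mem_closedBall, dist_zero_right] using hx)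
      · push_neg at hx
        have hx0 : x ≠ 0 := by
          intro h; rw [h] at hx; simp at hx; linarith
        obtain ⟨k, hk⟩ := mem_annulus_of_ne_zero hx0
        have hk1 : 1 < k := by
          have h2 : (2:ℝ) ^ (1:ℤ) < (2:ℝ) ^ (k:ℤ) := lt_of_lt_of_le hx hk.2
          exact (zpow_lt_zpow_iff_right₀ (by norm_num : (1:ℝ) < 2)).mp h2
        refine Or.inr (Set.mem_iUnion.mpr ⟨(k - 1).toNat, ?_⟩)
        have : (1 : ℤ) + ((k - 1).toNat : ℤ) = k := by omega
        rw [this]; exact hk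
    -- bound on each far annulus
    have hfar : ∀ j : ℕ, ∫⁻ x in annulus n (1 + j), (‖f x * φ x‖₊ : ℝ≥0∞) ≤
        (2:ℝ≥0∞) ^ (ε - (j:ℝ)*((N:ℝ) - ε)) * (ENNReal.ofReal C * D) := by
      intro j
      set k : ℤ := 1 + j with hkdef
      have hφk : ∀ x ∈ annulus n k, (‖φ x‖₊ : ℝ≥0∞) ≤
          ENNReal.ofReal C * (2:ℝ≥0∞) ^ (-(((k:ℝ) - 1)*N)) := by
        intro x hx
        have hxlb : (2:ℝ) ^ (k - 1 : ℤ) < ‖x‖ := hx.1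
        have hxpos : (0:ℝ) < (2:ℝ) ^ (k - 1 : ℤ) := by positivity
        have hpow : ((2:ℝ) ^ (k - 1 : ℤ)) ^ N ≤ ‖x‖ ^ N :=
          pow_le_pow_left₀ hxpos.le hxlb.le N
        have hpowpos : (0:ℝ) < ((2:ℝ) ^ (k - 1 : ℤ)) ^ N := by positivity
        have hφx : ‖φ x‖ ≤ C / ((2:ℝ) ^ (k - 1 : ℤ)) ^ N := by
          rw [le_div_iff₀ hpowpos]
          calc ‖φ x‖ * ((2:ℝ) ^ (k - 1 : ℤ)) ^ N ≤ ‖φ x‖ * ‖x‖ ^ N := by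
                apply mul_le_mul_of_nonneg_left hpow (norm_nonneg _)
            _ = ‖x‖ ^ N * ‖φ x‖ := by ring
            _ ≤ C := hφdecay x
        calc (‖φ x‖₊ : ℝ≥0∞) = ENNReal.ofReal ‖φ x‖ := (ofReal_norm (φ x)).symm
          _ ≤ ENNReal.ofReal (C / ((2:ℝ) ^ (k - 1 : ℤ)) ^ N) := ENNReal.ofReal_le_ofReal hφx
          _ = ENNReal.ofReal C * (2:ℝ≥0∞) ^ (-(((k:ℝ) - 1)*N)) := by
              rw [div_eq_mul_inv, ENNReal.ofReal_mul hCpos.le]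
              congr 1
              have hre : (((2:ℝ)^(k-1:ℤ))^N)⁻¹ = (2:ℝ) ^ (-(((k:ℝ) - 1)*(N:ℝ))) := by
                rw [← Real.rpow_natCast ((2:ℝ)^(k-1:ℤ)) N, ← Real.rpow_intCast 2 (k-1),
                  ← Real.rpow_mul (by norm_num), ← Real.rpow_neg (by norm_num)]
                congr 1
                push_cast
                ring
              rw [hre, two_rpow_eq]
      have hstep : ∫⁻ x in annulus n k, (‖f x * φ x‖₊ : ℝ≥0∞) ≤
          ∫⁻ x in annulus n k,
            (ENNReal.ofReal C * (2:ℝ≥0∞) ^ (-(((k:ℝ) - 1)*N))) * (‖f x‖₊ : ℝ≥0∞) := by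
        refine setLIntegral_mono (by fun_prop) fun x hx => ?_
        rw [nnnorm_mul, ENNReal.coe_mul, mul_comm]
        exact mul_le_mul' (hφk x hx) le_rfl
      rw [lintegral_const_mul _ hf.nnnorm.coe_nnreal_ennreal] at hstep
      refine hstep.trans ?_
      calc (ENNReal.ofReal C * (2:ℝ≥0∞) ^ (-(((k:ℝ) - 1)*N))) *
            ∫⁻ x in annulus n k, (‖f x‖₊ : ℝ≥0∞)
          ≤ (ENNReal.ofReal C * (2:ℝ≥0∞) ^ (-(((k:ℝ) - 1)*N))) *
            ((2:ℝ≥0∞) ^ ((k:ℝ) * ε) * D) := mul_le_mul' le_rfl (hann k)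
        _ = (2:ℝ≥0∞) ^ (ε - (j:ℝ)*((N:ℝ) - ε)) * (ENNReal.ofReal C * D) := by
            rw [show ε - (j:ℝ)*((N:ℝ) - ε) =
              (-(((k:ℝ) - 1)*N)) + (k:ℝ) * ε by rw [hkdef]; push_cast; ring, two_rpow_add]
            ring
    calc ∫⁻ x, (‖f x * φ x‖₊ : ℝ≥0∞)
        = ∫⁻ x in Set.univ, (‖f x * φ x‖₊ : ℝ≥0∞) := by rw [Measure.restrict_univ]
      _ ≤ ∫⁻ x in (Metric.closedBall 0 ((2:ℝ)^(1:ℤ)) ∪ ⋃ j : ℕ, annulus n (1 + j)),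
            (‖f x * φ x‖₊ : ℝ≥0∞) := lintegral_mono_set hcover
      _ ≤ (∫⁻ x in Metric.closedBall (0:Eu n) ((2:ℝ)^(1:ℤ)), (‖f x * φ x‖₊ : ℝ≥0∞)) +
          ∫⁻ x in (⋃ j : ℕ, annulus n (1 + j)), (‖f x * φ x‖₊ : ℝ≥0∞) :=
          lintegral_union_le _ _ _
      _ < ∞ := by
          apply ENNReal.add_lt_top.mpr
          constructor
          · have hb : ∫⁻ x in Metric.closedBall (0:Eu n) ((2:ℝ)^(1:ℤ)), (‖f x * φ x‖₊ : ℝ≥0∞) ≤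
                ∫⁻ x in Metric.closedBall (0:Eu n) ((2:ℝ)^(1:ℤ)),
                  ENNReal.ofReal C₀ * (‖f x‖₊ : ℝ≥0∞) := by
              refine setLIntegral_mono (by fun_prop) fun x _ => ?_
              rw [nnnorm_mul, ENNReal.coe_mul, mul_comm]
              refine mul_le_mul' ?_ le_rfl
              rw [show ((‖φ x‖₊ : ℝ≥0∞)) = ENNReal.ofReal ‖φ x‖ from (ofReal_norm (φ x)).symm]
              exact ENNReal.ofReal_le_ofReal (hφbound x)
            rw [lintegral_const_mul _ hf.nnnorm.coe_nnreal_ennreal] at hb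
            exact lt_of_le_of_lt hb
              (ENNReal.mul_lt_top ENNReal.ofReal_lt_top (hball 1))
          · calc ∫⁻ x in (⋃ j : ℕ, annulus n (1 + j)), (‖f x * φ x‖₊ : ℝ≥0∞)
                ≤ ∑' j : ℕ, ∫⁻ x in annulus n (1 + j), (‖f x * φ x‖₊ : ℝ≥0∞) :=
                  lintegral_iUnion_le _ _
              _ ≤ ∑' j : ℕ, (2:ℝ≥0∞) ^ (ε - (j:ℝ)*((N:ℝ) - ε)) *
                    (ENNReal.ofReal C * D) := ENNReal.tsum_le_tsum hfar
              _ < ∞ := geom_sum_lt_top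
                  (ENNReal.mul_ne_top ENNReal.ofReal_ne_top hD) _ (by linarith)
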